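/- Let j ≥ 1 be an integer and f a sufficiently smooth 2π-periodic function. Then the commutator of the Hilbert transform with multiplication by cos(jx) satisfies: [H, cos(j·)]f(x) = (i/2)f̂_0(e^{-ijx} - e^{ijx}) + (i/2)(f̂_j - f̂_{-j}) + i·Σ_{m=1}^{j-1}(f̂_m e^{-i(j-m)x} - f̂_{-m} e^{i(j-m)x}). -/

import Mathlib

namespace Stmt4Aux

noncomputable def E (x : ℝ) (k : ℤ) : ℂ := Complex.exp (Complex.I * (k : ℂ) * (x : ℂ))

lemma E_def (x : ℝ) (k : ℤ) : E x k = Complex.exp (Complex.I * (k : ℂ) * (x : ℂ)) := rfl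

lemma normE (x : ℝ) (k : ℤ) : ‖E x k‖ = 1 := by
  have h : Complex.I * (k : ℂ) * (x : ℂ) = (((k : ℝ) * x : ℝ) : ℂ) * Complex.I := by
    push_cast; ring
  rw [E_def, h]
  exact Complex.norm_exp_ofReal_mul_I _

lemma Eadd (x : ℝ) (k l : ℤ) : E x (k + l) = E x k * E x l := by
  rw [E_def, E_def, E_def, ← Complex.exp_add]
  congr 1
  push_cast; ring

lemma Ezero (x : ℝ) : E x 0 = 1 := by
  rw [E_def]; simp

lemma coefbound (w : ℤ) : ‖(-Complex.I / 2) * ((w.sign : ℤ) : ℂ)‖ ≤ 1 := by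
  have hs : ‖((w.sign : ℤ) : ℂ)‖ ≤ 1 := by
    rcases lt_trichotomy w 0 with h | h | h
    · rw [Int.sign_eq_neg_one_of_neg h]; norm_num
    · rw [h, Int.sign_zero]; norm_num
    · rw [Int.sign_eq_one_of_pos h]; norm_num
  rw [norm_mul]
  have : ‖(-Complex.I / 2 : ℂ)‖ = 1 / 2 := by
    rw [norm_div, norm_neg, Complex.norm_I]; norm_num
  rw [this]
  nlinarith [norm_nonneg ((w.sign : ℤ) : ℂ)]

lemma summ (a : ℤ → ℂ) (ha : Summable fun k : ℤ => ‖a k‖) (c : ℤ → ℂ)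
    (hc : ∀ k, ‖c k‖ ≤ 1) (t u : ℤ) (x : ℝ) :
    Summable (fun k : ℤ => c k * a (k + t) * E x (k + u)) := by
  have h1 : Summable (fun k : ℤ => ‖a (k + t)‖) := by
    have := (Equiv.summable_iff (Equiv.addRight t) (f := fun k : ℤ => ‖a k‖)).mpr ha
    exact this
  refine Summable.of_norm_bounded h1 fun k => ?_
  rw [norm_mul, norm_mul, normE, mul_one]
  exact mul_le_of_le_one_left (norm_nonneg _) (hc k)

end Stmt4Aux

open Stmt4Aux

/-- commutator of the Hilbert transform with `cos (j·)`.
Let `j ≥ 1` and let `f` be a smooth `2π`-periodic function with absolutely summable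
Fourier coefficients `a : ℤ → ℂ`.  The periodic Hilbert transform acts on Fourier modes by
`(Hf)^(k) = -i·sgn(k)·a k`, and the Fourier coefficients of `cos(j·)·f` are
`(a (k-j) + a (k+j))/2`.  Then for every `x`:
`[H, cos(j·)]f(x) = (i/2)·a₀·(e^{-ijx} - e^{ijx}) + (i/2)(a_j - a_{-j})
  + i·∑_{m=1}^{j-1} (a_m e^{-i(j-m)x} - a_{-m} e^{i(j-m)x})`. -/
theorem stmt4 (j : ℤ) (hj : 1 ≤ j) (a : ℤ → ℂ)
    (ha : Summable fun k : ℤ => ‖a k‖) (x : ℝ) :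
    (∑' k : ℤ, (-Complex.I) * ((k.sign : ℤ) : ℂ) * ((a (k - j) + a (k + j)) / 2) *
        Complex.exp (Complex.I * (k : ℂ) * (x : ℂ)))
      - Complex.cos ((j : ℂ) * (x : ℂ)) *
        (∑' k : ℤ, (-Complex.I) * ((k.sign : ℤ) : ℂ) * a k *
          Complex.exp (Complex.I * (k : ℂ) * (x : ℂ)))
    = (Complex.I / 2) * a 0 *
        (Complex.exp (-(Complex.I * (j : ℂ) * (x : ℂ))) -
          Complex.exp (Complex.I * (j : ℂ) * (x : ℂ)))
      + (Complex.I / 2) * (a j - a (-j))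
      + Complex.I * ∑ m ∈ Finset.Icc (1 : ℤ) (j - 1),
          (a m * Complex.exp (-(Complex.I * ((j : ℂ) - (m : ℂ)) * (x : ℂ)))
            - a (-m) * Complex.exp (Complex.I * ((j : ℂ) - (m : ℂ)) * (x : ℂ))) := by
  classical
  -- fold the exponentials
  simp only [← E_def]
  -- summability facts
  have hsummA1 : Summable (fun k : ℤ =>
      (-Complex.I / 2) * ((k.sign : ℤ) : ℂ) * a (k - j) * E x k) := by
    simpa [sub_eq_add_neg] using
      summ a ha (fun k => (-Complex.I / 2) * ((k.sign : ℤ) : ℂ))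
        (fun k => coefbound k) (-j) 0 x
  have hsummA2 : Summable (fun k : ℤ =>
      (-Complex.I / 2) * ((k.sign : ℤ) : ℂ) * a (k + j) * E x k) := by
    simpa using
      summ a ha (fun k => (-Complex.I / 2) * ((k.sign : ℤ) : ℂ))
        (fun k => coefbound k) j 0 x
  have hsummB1 : Summable (fun k : ℤ =>
      (-Complex.I / 2) * (((k - j).sign : ℤ) : ℂ) * a (k - j) * E x k) := by
    simpa [sub_eq_add_neg] using
      summ a ha (fun k => (-Complex.I / 2) * (((k - j).sign : ℤ) : ℂ))
        (fun k => coefbound (k - j)) (-j) 0 x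
  have hsummB2 : Summable (fun k : ℤ =>
      (-Complex.I / 2) * (((k + j).sign : ℤ) : ℂ) * a (k + j) * E x k) := by
    simpa using
      summ a ha (fun k => (-Complex.I / 2) * (((k + j).sign : ℤ) : ℂ))
        (fun k => coefbound (k + j)) j 0 x
  have hsummC1 : Summable (fun k : ℤ =>
      (-Complex.I / 2) * ((k.sign : ℤ) : ℂ) * a k * E x (k + j)) := by
    simpa using
      summ a ha (fun k => (-Complex.I / 2) * ((k.sign : ℤ) : ℂ))
        (fun k => coefbound k) 0 j x
  have hsummC2 : Summable (fun k : ℤ =>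
      (-Complex.I / 2) * ((k.sign : ℤ) : ℂ) * a k * E x (k - j)) := by
    simpa [sub_eq_add_neg] using
      summ a ha (fun k => (-Complex.I / 2) * ((k.sign : ℤ) : ℂ))
        (fun k => coefbound k) 0 (-j) x
  -- split the first tsum
  have hA : (∑' k : ℤ, (-Complex.I) * ((k.sign : ℤ) : ℂ) * ((a (k - j) + a (k + j)) / 2) * E x k)
      = (∑' k : ℤ, (-Complex.I / 2) * ((k.sign : ℤ) : ℂ) * a (k - j) * E x k)
        + (∑' k : ℤ, (-Complex.I / 2) * ((k.sign : ℤ) : ℂ) * a (k + j) * E x k) := by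
    rw [← Summable.tsum_add hsummA1 hsummA2]
    exact tsum_congr fun k => by ring
  -- cosine as exponentials
  have hcos : Complex.cos ((j : ℂ) * (x : ℂ)) = (E x j + E x (-j)) / 2 := by
    have e1 : Complex.exp (((j : ℂ) * (x : ℂ)) * Complex.I) = E x j := by
      rw [E_def]; congr 1; push_cast; ring
    have e2 : Complex.exp (-((j : ℂ) * (x : ℂ)) * Complex.I) = E x (-j) := by
      rw [E_def]; congr 1; push_cast; ring
    rw [show Complex.cos ((j : ℂ) * (x : ℂ))
        = (Complex.exp (((j : ℂ) * (x : ℂ)) * Complex.I)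
            + Complex.exp (-((j : ℂ) * (x : ℂ)) * Complex.I)) / 2 from rfl, e1, e2]
  -- distribute the cosine over the second tsum
  have hB : Complex.cos ((j : ℂ) * (x : ℂ))
        * (∑' k : ℤ, (-Complex.I) * ((k.sign : ℤ) : ℂ) * a k * E x k)
      = (∑' k : ℤ, (-Complex.I / 2) * ((k.sign : ℤ) : ℂ) * a k * E x (k + j))
        + (∑' k : ℤ, (-Complex.I / 2) * ((k.sign : ℤ) : ℂ) * a k * E x (k - j)) := by
    rw [← tsum_mul_left, ← Summable.tsum_add hsummC1 hsummC2]
    refine tsum_congr fun k => ?_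
    rw [hcos, Eadd x k j, show E x (k - j) = E x k * E x (-j) from by
      rw [sub_eq_add_neg, Eadd]]
    ring
  -- reindex the two shifted tsums
  have r1 : (∑' k : ℤ, (-Complex.I / 2) * ((k.sign : ℤ) : ℂ) * a k * E x (k + j))
      = ∑' k : ℤ, (-Complex.I / 2) * (((k - j).sign : ℤ) : ℂ) * a (k - j) * E x k := by
    calc (∑' k : ℤ, (-Complex.I / 2) * ((k.sign : ℤ) : ℂ) * a k * E x (k + j))
        = ∑' k : ℤ, (-Complex.I / 2) * (((k - j).sign : ℤ) : ℂ) * a (k - j) * E x (k - j + j) :=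
          ((Equiv.subRight j).tsum_eq
            (fun k => (-Complex.I / 2) * ((k.sign : ℤ) : ℂ) * a k * E x (k + j))).symm
      _ = _ := tsum_congr fun k => by rw [show k - j + j = k from by ring]
  have r2 : (∑' k : ℤ, (-Complex.I / 2) * ((k.sign : ℤ) : ℂ) * a k * E x (k - j))
      = ∑' k : ℤ, (-Complex.I / 2) * (((k + j).sign : ℤ) : ℂ) * a (k + j) * E x k := by
    calc (∑' k : ℤ, (-Complex.I / 2) * ((k.sign : ℤ) : ℂ) * a k * E x (k - j))
        = ∑' k : ℤ, (-Complex.I / 2) * (((k + j).sign : ℤ) : ℂ) * a (k + j) * E x (k + j - j) :=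
          ((Equiv.addRight j).tsum_eq
            (fun k => (-Complex.I / 2) * ((k.sign : ℤ) : ℂ) * a k * E x (k - j))).symm
      _ = _ := tsum_congr fun k => by rw [show k + j - j = k from by ring]
  -- the two commutator pieces
  have hd1 : (∑' k : ℤ, (-Complex.I / 2) * ((k.sign : ℤ) : ℂ) * a (k - j) * E x k)
        - (∑' k : ℤ, (-Complex.I / 2) * (((k - j).sign : ℤ) : ℂ) * a (k - j) * E x k)
      = ∑' k : ℤ, (-Complex.I / 2) * (((k.sign : ℤ) : ℂ) - (((k - j).sign : ℤ) : ℂ))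
          * a (k - j) * E x k := by
    rw [← Summable.tsum_sub hsummA1 hsummB1]
    exact tsum_congr fun k => by ring
  have hd2 : (∑' k : ℤ, (-Complex.I / 2) * ((k.sign : ℤ) : ℂ) * a (k + j) * E x k)
        - (∑' k : ℤ, (-Complex.I / 2) * (((k + j).sign : ℤ) : ℂ) * a (k + j) * E x k)
      = ∑' k : ℤ, (-Complex.I / 2) * (((k.sign : ℤ) : ℂ) - (((k + j).sign : ℤ) : ℂ))
          * a (k + j) * E x k := by
    rw [← Summable.tsum_sub hsummA2 hsummB2]
    exact tsum_congr fun k => by ring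
  -- the pieces are finitely supported
  have ht1 : (∑' k : ℤ, (-Complex.I / 2) * (((k.sign : ℤ) : ℂ) - (((k - j).sign : ℤ) : ℂ))
          * a (k - j) * E x k)
      = ∑ k ∈ Finset.Icc (0 : ℤ) j, (-Complex.I / 2)
          * (((k.sign : ℤ) : ℂ) - (((k - j).sign : ℤ) : ℂ)) * a (k - j) * E x k := by
    refine tsum_eq_sum ?_
    intro b hb
    simp only [Finset.mem_Icc, not_and, not_le] at hb
    rcases lt_or_ge b 0 with h | h
    · rw [Int.sign_eq_neg_one_of_neg h,
        Int.sign_eq_neg_one_of_neg (show b - j < 0 by omega)]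
      push_cast; ring
    · have hbj : j < b := hb h
      rw [Int.sign_eq_one_of_pos (show (0 : ℤ) < b by omega),
        Int.sign_eq_one_of_pos (show (0 : ℤ) < b - j by omega)]
      push_cast; ring
  have ht2 : (∑' k : ℤ, (-Complex.I / 2) * (((k.sign : ℤ) : ℂ) - (((k + j).sign : ℤ) : ℂ))
          * a (k + j) * E x k)
      = ∑ k ∈ Finset.Icc (-j) (0 : ℤ), (-Complex.I / 2)
          * (((k.sign : ℤ) : ℂ) - (((k + j).sign : ℤ) : ℂ)) * a (k + j) * E x k := by
    refine tsum_eq_sum ?_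
    intro b hb
    simp only [Finset.mem_Icc, not_and, not_le] at hb
    rcases lt_or_ge b (-j) with h | h
    · rw [Int.sign_eq_neg_one_of_neg (show b < 0 by omega),
        Int.sign_eq_neg_one_of_neg (show b + j < 0 by omega)]
      push_cast; ring
    · have hb0 : 0 < b := hb h
      rw [Int.sign_eq_one_of_pos hb0,
        Int.sign_eq_one_of_pos (show (0 : ℤ) < b + j by omega)]
      push_cast; ring
  -- split off the endpoints
  have hset1 : Finset.Icc (0 : ℤ) j = insert 0 (insert j (Finset.Icc 1 (j - 1))) := by
    ext k; simp only [Finset.mem_Icc, Finset.mem_insert]; omega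
  have h0mem1 : (0 : ℤ) ∉ insert j (Finset.Icc 1 (j - 1)) := by
    simp only [Finset.mem_insert, Finset.mem_Icc]; omega
  have hjmem1 : j ∉ Finset.Icc (1 : ℤ) (j - 1) := by
    simp only [Finset.mem_Icc]; omega
  have hset2 : Finset.Icc (-j) (0 : ℤ) = insert 0 (insert (-j) (Finset.Icc (1 - j) (-1))) := by
    ext k; simp only [Finset.mem_Icc, Finset.mem_insert]; omega
  have h0mem2 : (0 : ℤ) ∉ insert (-j) (Finset.Icc (1 - j) (-1)) := by
    simp only [Finset.mem_insert, Finset.mem_Icc]; omega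
  have hjmem2 : -j ∉ Finset.Icc (1 - j) (-1 : ℤ) := by
    simp only [Finset.mem_Icc]; omega
  -- endpoint values
  have hd10 : (-Complex.I / 2) * ((((0 : ℤ).sign : ℤ) : ℂ) - ((((0 : ℤ) - j).sign : ℤ) : ℂ))
        * a ((0 : ℤ) - j) * E x 0 = (-Complex.I / 2) * a (-j) := by
    rw [show (0 : ℤ) - j = -j from zero_sub j, Int.sign_zero,
      Int.sign_eq_neg_one_of_neg (show -j < 0 by omega), Ezero]
    push_cast; ring
  have hd1j : (-Complex.I / 2) * (((j.sign : ℤ) : ℂ) - (((j - j).sign : ℤ) : ℂ))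
        * a (j - j) * E x j = (-Complex.I / 2) * a 0 * E x j := by
    rw [show j - j = (0 : ℤ) from sub_self j, Int.sign_zero,
      Int.sign_eq_one_of_pos (show (0 : ℤ) < j by omega)]
    push_cast; ring
  have hd20 : (-Complex.I / 2) * ((((0 : ℤ).sign : ℤ) : ℂ) - ((((0 : ℤ) + j).sign : ℤ) : ℂ))
        * a ((0 : ℤ) + j) * E x 0 = (Complex.I / 2) * a j := by
    rw [show (0 : ℤ) + j = j from zero_add j, Int.sign_zero,
      Int.sign_eq_one_of_pos (show (0 : ℤ) < j by omega), Ezero]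
    push_cast; ring
  have hd2j : (-Complex.I / 2) * ((((-j : ℤ).sign : ℤ) : ℂ) - (((-j + j).sign : ℤ) : ℂ))
        * a (-j + j) * E x (-j) = (Complex.I / 2) * a 0 * E x (-j) := by
    rw [show -j + j = (0 : ℤ) from neg_add_cancel j, Int.sign_zero,
      Int.sign_eq_neg_one_of_neg (show -j < 0 by omega)]
    push_cast; ring
  -- interior sums
  have hint1 : (∑ k ∈ Finset.Icc (1 : ℤ) (j - 1), (-Complex.I / 2)
          * (((k.sign : ℤ) : ℂ) - (((k - j).sign : ℤ) : ℂ)) * a (k - j) * E x k)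
      = ∑ m ∈ Finset.Icc (1 : ℤ) (j - 1), (-Complex.I) * (a (-m) * E x (j - m)) := by
    have step1 : ∀ k ∈ Finset.Icc (1 : ℤ) (j - 1),
        (-Complex.I / 2) * (((k.sign : ℤ) : ℂ) - (((k - j).sign : ℤ) : ℂ)) * a (k - j) * E x k
          = (-Complex.I) * (a (k - j) * E x k) := by
      intro k hk
      simp only [Finset.mem_Icc] at hk
      rw [Int.sign_eq_one_of_pos (show (0 : ℤ) < k by omega),
        Int.sign_eq_neg_one_of_neg (show k - j < 0 by omega)]
      push_cast; ring
    rw [Finset.sum_congr rfl step1]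
    have himg : Finset.image (fun k => j - k) (Finset.Icc (1 : ℤ) (j - 1))
        = Finset.Icc (1 : ℤ) (j - 1) := by
      ext m
      simp only [Finset.mem_image, Finset.mem_Icc]
      constructor
      · rintro ⟨k, hk, rfl⟩; omega
      · intro hm; exact ⟨j - m, by omega, by omega⟩
    rw [show (∑ m ∈ Finset.Icc (1 : ℤ) (j - 1), (-Complex.I) * (a (-m) * E x (j - m)))
        = ∑ m ∈ Finset.image (fun k => j - k) (Finset.Icc (1 : ℤ) (j - 1)),
            (-Complex.I) * (a (-m) * E x (j - m)) from by rw [himg]]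
    rw [Finset.sum_image (fun p _ q _ h => by omega)]
    refine Finset.sum_congr rfl fun k hk => ?_
    rw [show -(j - k) = k - j from by ring, show j - (j - k) = k from by ring]
  have hint2 : (∑ k ∈ Finset.Icc (1 - j) (-1 : ℤ), (-Complex.I / 2)
          * (((k.sign : ℤ) : ℂ) - (((k + j).sign : ℤ) : ℂ)) * a (k + j) * E x k)
      = ∑ m ∈ Finset.Icc (1 : ℤ) (j - 1), Complex.I * (a m * E x (m - j)) := by
    have step1 : ∀ k ∈ Finset.Icc (1 - j) (-1 : ℤ),
        (-Complex.I / 2) * (((k.sign : ℤ) : ℂ) - (((k + j).sign : ℤ) : ℂ)) * a (k + j) * E x k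
          = Complex.I * (a (k + j) * E x k) := by
      intro k hk
      simp only [Finset.mem_Icc] at hk
      rw [Int.sign_eq_neg_one_of_neg (show k < 0 by omega),
        Int.sign_eq_one_of_pos (show (0 : ℤ) < k + j by omega)]
      push_cast; ring
    rw [Finset.sum_congr rfl step1]
    have himg : Finset.image (fun m => m - j) (Finset.Icc (1 : ℤ) (j - 1))
        = Finset.Icc (1 - j) (-1 : ℤ) := by
      ext k
      simp only [Finset.mem_image, Finset.mem_Icc]
      constructor
      · rintro ⟨m, hm, rfl⟩; omega
      · intro hk; exact ⟨k + j, by omega, by omega⟩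
    rw [← himg, Finset.sum_image (fun p _ q _ h => by omega)]
    refine Finset.sum_congr rfl fun m hm => ?_
    rw [show m - j + j = m from by ring]
  -- rewrite the RHS exponentials
  have eneg : Complex.exp (-(Complex.I * (j : ℂ) * (x : ℂ))) = E x (-j) := by
    rw [E_def]; congr 1; push_cast; ring
  have eterm : ∀ m ∈ Finset.Icc (1 : ℤ) (j - 1),
      (a m * Complex.exp (-(Complex.I * ((j : ℂ) - (m : ℂ)) * (x : ℂ)))
          - a (-m) * Complex.exp (Complex.I * ((j : ℂ) - (m : ℂ)) * (x : ℂ)))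
        = a m * E x (m - j) - a (-m) * E x (j - m) := by
    intro m _
    rw [show Complex.exp (-(Complex.I * ((j : ℂ) - (m : ℂ)) * (x : ℂ))) = E x (m - j) from by
        rw [E_def]; congr 1; push_cast; ring,
      show Complex.exp (Complex.I * ((j : ℂ) - (m : ℂ)) * (x : ℂ)) = E x (j - m) from by
        rw [E_def]; congr 1; push_cast; ring]
  -- assemble everything
  calc (∑' k : ℤ, (-Complex.I) * ((k.sign : ℤ) : ℂ) * ((a (k - j) + a (k + j)) / 2) * E x k)
        - Complex.cos ((j : ℂ) * (x : ℂ))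
          * (∑' k : ℤ, (-Complex.I) * ((k.sign : ℤ) : ℂ) * a k * E x k)
      = ((∑' k : ℤ, (-Complex.I / 2) * ((k.sign : ℤ) : ℂ) * a (k - j) * E x k)
            - (∑' k : ℤ, (-Complex.I / 2) * (((k - j).sign : ℤ) : ℂ) * a (k - j) * E x k))
        + ((∑' k : ℤ, (-Complex.I / 2) * ((k.sign : ℤ) : ℂ) * a (k + j) * E x k)
            - (∑' k : ℤ, (-Complex.I / 2) * (((k + j).sign : ℤ) : ℂ) * a (k + j) * E x k)) := by
        rw [hA, hB, r1, r2]; ring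
    _ = (∑ k ∈ Finset.Icc (0 : ℤ) j, (-Complex.I / 2)
            * (((k.sign : ℤ) : ℂ) - (((k - j).sign : ℤ) : ℂ)) * a (k - j) * E x k)
        + ∑ k ∈ Finset.Icc (-j) (0 : ℤ), (-Complex.I / 2)
            * (((k.sign : ℤ) : ℂ) - (((k + j).sign : ℤ) : ℂ)) * a (k + j) * E x k := by
        rw [hd1, hd2, ht1, ht2]
    _ = ((-Complex.I / 2) * a (-j) + ((-Complex.I / 2) * a 0 * E x j
            + ∑ m ∈ Finset.Icc (1 : ℤ) (j - 1), (-Complex.I) * (a (-m) * E x (j - m))))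
        + ((Complex.I / 2) * a j + ((Complex.I / 2) * a 0 * E x (-j)
            + ∑ m ∈ Finset.Icc (1 : ℤ) (j - 1), Complex.I * (a m * E x (m - j)))) := by
        rw [hset1, Finset.sum_insert h0mem1, Finset.sum_insert hjmem1,
          hset2, Finset.sum_insert h0mem2, Finset.sum_insert hjmem2,
          hd10, hd1j, hint1, hd20, hd2j, hint2]
    _ = (Complex.I / 2) * a 0 * (Complex.exp (-(Complex.I * (j : ℂ) * (x : ℂ)))
            - Complex.exp (Complex.I * (j : ℂ) * (x : ℂ)))
        + (Complex.I / 2) * (a j - a (-j))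
        + Complex.I * ∑ m ∈ Finset.Icc (1 : ℤ) (j - 1),
            (a m * Complex.exp (-(Complex.I * ((j : ℂ) - (m : ℂ)) * (x : ℂ)))
              - a (-m) * Complex.exp (Complex.I * ((j : ℂ) - (m : ℂ)) * (x : ℂ))) := by
        rw [← E_def x j, eneg, Finset.sum_congr rfl eterm, Finset.mul_sum,
          show (∑ m ∈ Finset.Icc (1 : ℤ) (j - 1),
              Complex.I * (a m * E x (m - j) - a (-m) * E x (j - m)))
            = ∑ m ∈ Finset.Icc (1 : ℤ) (j - 1),
                (Complex.I * (a m * E x (m - j)) + (-Complex.I) * (a (-m) * E x (j - m))) from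
            Finset.sum_congr rfl fun m _ => by ring,
          Finset.sum_add_distrib]
        ring
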